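/- arXiv:math/0505316 — 2 statements merged into one kernel-verified Lean document; each statement's English description precedes it below -/
import Mathlib

section
/- For every nonnegative integers m and n, the integral over [0,∞) of exp(-x)·L̃_m(x)·L̃_n(x) dx equals (n!)² if m = n and 0 otherwise, where L̃_n(x) = Σ_{k=0}^{n} (-1)^k (n!)²/((k!)²(n-k)!) x^k is the n-th (unnormalized) Laguerre polynomial. -/
open Real MeasureTheory

/-- The `n`-th unnormalized Laguerre polynomial
`L̃_n(x) = ∑_{k=0}^{n} (-1)^k (n!)² / ((k!)² (n-k)!) x^k`. -/
noncomputable def unnormLaguerre (n : ℕ) (x : ℝ) : ℝ :=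
  ∑ k ∈ Finset.range (n + 1),
    (-1 : ℝ) ^ k * ((n.factorial : ℝ) ^ 2 /
      ((k.factorial : ℝ) ^ 2 * ((n - k).factorial : ℝ))) * x ^ k

noncomputable def lagCoeff (n k : ℕ) : ℝ :=
  (-1 : ℝ) ^ k * ((n.factorial : ℝ) ^ 2 / ((k.factorial : ℝ) ^ 2 * ((n - k).factorial : ℝ)))

private lemma alt_sum_choose (N : ℕ) :
    ∑ i ∈ Finset.range (N + 1), (-1 : ℝ) ^ i * (N.choose i : ℝ)
      = if N = 0 then 1 else 0 := by
  have h := Int.alternating_sum_range_choose (n := N)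
  have : ((∑ i ∈ Finset.range (N + 1), (-1 : ℤ) ^ i * (N.choose i : ℤ) : ℤ) : ℝ)
      = ∑ i ∈ Finset.range (N + 1), (-1 : ℝ) ^ i * (N.choose i : ℝ) := by
    push_cast; ring
  rw [← this, h]
  split_ifs <;> norm_num

/-- `∑_{k=0}^{n} (-1)^k C(n,k) C(k,m) = (-1)^n δ_{mn}` -/
private lemma sumB (n m : ℕ) :
    ∑ k ∈ Finset.range (n + 1), (-1 : ℝ) ^ k * (n.choose k : ℝ) * (k.choose m : ℝ)
      = if m = n then (-1 : ℝ) ^ n else 0 := by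
  rcases le_or_gt m n with h | h
  · have hsub : Finset.Ico m (n + 1) ⊆ Finset.range (n + 1) := by
      intro x hx; simp only [Finset.mem_Ico] at hx
      exact Finset.mem_range.mpr hx.2
    have h1 : ∑ k ∈ Finset.range (n + 1), (-1 : ℝ) ^ k * (n.choose k : ℝ) * (k.choose m : ℝ)
        = ∑ k ∈ Finset.Ico m (n + 1), (-1 : ℝ) ^ k * (n.choose k : ℝ) * (k.choose m : ℝ) := by
      refine (Finset.sum_subset hsub ?_).symm
      intro x hx hx'
      simp only [Finset.mem_Ico, Finset.mem_range, not_and, not_lt] at hx hx'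
      have hxm : x < m := by omega
      rw [Nat.choose_eq_zero_of_lt hxm]
      simp
    rw [h1, Finset.sum_Ico_eq_sum_range]
    have hnm : n + 1 - m = (n - m) + 1 := by omega
    rw [hnm]
    have h2 : ∀ i ∈ Finset.range ((n - m) + 1),
        (-1 : ℝ) ^ (m + i) * (n.choose (m + i) : ℝ) * ((m + i).choose m : ℝ)
        = ((-1 : ℝ) ^ m * (n.choose m : ℝ)) * ((-1 : ℝ) ^ i * ((n - m).choose i : ℝ)) := by
      intro i hi
      simp only [Finset.mem_range] at hi
      have hle : m + i ≤ n := by omega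
      have := Nat.choose_mul (n := n) (k := m + i) (s := m) (Nat.le_add_right m i)
      have hcast : (n.choose (m + i) : ℝ) * ((m + i).choose m : ℝ)
          = (n.choose m : ℝ) * ((n - m).choose (m + i - m) : ℝ) := by exact_mod_cast this
      have : m + i - m = i := by omega
      rw [this] at hcast
      rw [pow_add]
      linear_combination ((-1:ℝ)^m * (-1:ℝ)^i) * hcast
    rw [Finset.sum_congr rfl h2, ← Finset.mul_sum, alt_sum_choose]
    rcases eq_or_lt_of_le h with heq | hlt
    · subst heq
      simp
    · have h3 : n - m ≠ 0 := by omega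
      have h4 : ¬ (m = n) := by omega
      rw [if_neg h3, if_neg h4]
      ring
  · have h4 : ¬ (m = n) := by omega
    rw [if_neg h4]
    refine Finset.sum_eq_zero fun k hk => ?_
    simp only [Finset.mem_range] at hk
    have hkm : k < m := by omega
    rw [Nat.choose_eq_zero_of_lt hkm]
    simp

/-- Vandermonde: C(j+k,k) = ∑_{a≤M} C(k,a) C(j,a), valid when j ≤ M. -/
private lemma vander (k j M : ℕ) (hj : j ≤ M) :
    ((j + k).choose k : ℝ) = ∑ a ∈ Finset.range (M + 1), (k.choose a : ℝ) * (j.choose a : ℝ) := by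
  have h0 : (j + k).choose k = (k + j).choose j := by
    rw [Nat.add_comm, Nat.choose_symm_add]
  have h1 := Nat.add_choose_eq k j j
  rw [Finset.Nat.sum_antidiagonal_eq_sum_range_succ_mk] at h1
  have h2 : ∀ i ∈ Finset.range (j + 1), k.choose i * j.choose (j - i) = k.choose i * j.choose i := by
    intro i hi
    simp only [Finset.mem_range] at hi
    rw [Nat.choose_symm (by omega)]
  rw [Finset.sum_congr rfl h2] at h1
  have h3 : Finset.range (j + 1) ⊆ Finset.range (M + 1) := by
    intro x hx; simp only [Finset.mem_range] at *; omega
  have h4 : ∑ a ∈ Finset.range (M + 1), k.choose a * j.choose a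
      = ∑ a ∈ Finset.range (j + 1), k.choose a * j.choose a := by
    refine (Finset.sum_subset h3 ?_).symm
    intro x hx hx'
    simp only [Finset.mem_range] at hx hx'
    rw [Nat.choose_eq_zero_of_lt (show j < x by omega)]
    simp
  rw [h0, h1, ← h4]
  push_cast
  ring

/-- `∑_{j=0}^m (-1)^j C(m,j) C(j+k,k) = (-1)^m C(k,m)` -/
private lemma sumA (m k : ℕ) :
    ∑ j ∈ Finset.range (m + 1), (-1 : ℝ) ^ j * (m.choose j : ℝ) * ((j + k).choose k : ℝ)
      = (-1 : ℝ) ^ m * (k.choose m : ℝ) := by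
  have h1 : ∀ j ∈ Finset.range (m + 1),
      (-1 : ℝ) ^ j * (m.choose j : ℝ) * ((j + k).choose k : ℝ)
      = ∑ a ∈ Finset.range (m + 1),
          (k.choose a : ℝ) * ((-1 : ℝ) ^ j * (m.choose j : ℝ) * (j.choose a : ℝ)) := by
    intro j hj
    simp only [Finset.mem_range] at hj
    rw [vander k j m (by omega), Finset.mul_sum]
    exact Finset.sum_congr rfl fun a _ => by ring
  rw [Finset.sum_congr rfl h1, Finset.sum_comm]
  have h2 : ∀ a ∈ Finset.range (m + 1),
      ∑ j ∈ Finset.range (m + 1),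
        (k.choose a : ℝ) * ((-1 : ℝ) ^ j * (m.choose j : ℝ) * (j.choose a : ℝ))
      = (k.choose a : ℝ) * (if a = m then (-1 : ℝ) ^ m else 0) := by
    intro a _
    rw [← Finset.mul_sum, sumB m a]
  rw [Finset.sum_congr rfl h2]
  rw [Finset.sum_congr rfl (fun a (_ : a ∈ Finset.range (m+1)) => mul_ite_zero ..)]
  rw [Finset.sum_ite_eq' (Finset.range (m + 1)) m fun a => (k.choose a : ℝ) * (-1 : ℝ) ^ m]
  rw [if_pos (Finset.self_mem_range_succ m)]
  ring

private lemma coeff_eq (m j : ℕ) (hj : j ≤ m) :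
    lagCoeff m j = (-1 : ℝ) ^ j * (m.choose j : ℝ) * (m.factorial : ℝ) / (j.factorial : ℝ) := by
  unfold lagCoeff
  have e1 : (m.choose j : ℝ) * (j.factorial : ℝ) * ((m - j).factorial : ℝ) = m.factorial := by
    exact_mod_cast Nat.choose_mul_factorial_mul_factorial hj
  have hjf : (j.factorial : ℝ) ≠ 0 := by positivity
  have hmjf : ((m - j).factorial : ℝ) ≠ 0 := by positivity
  field_simp
  linear_combination -e1

private lemma key_term (m n j k : ℕ) (hj : j ≤ m) (hk : k ≤ n) :
    lagCoeff m j * lagCoeff n k * ((j + k).factorial : ℝ)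
      = ((m.factorial : ℝ) * (n.factorial : ℝ) * ((-1 : ℝ) ^ k * (n.choose k : ℝ)))
        * ((-1 : ℝ) ^ j * (m.choose j : ℝ) * ((j + k).choose k : ℝ)) := by
  rw [coeff_eq m j hj, coeff_eq n k hk]
  have e3 : ((j + k).choose k : ℝ) * (j.factorial : ℝ) * (k.factorial : ℝ)
      = ((j + k).factorial : ℝ) := by
    exact_mod_cast Nat.add_choose_mul_factorial_mul_factorial j k
  have hjf : (j.factorial : ℝ) ≠ 0 := by positivity
  have hkf : (k.factorial : ℝ) ≠ 0 := by positivity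
  rw [← e3]
  field_simp

private lemma double_sum (m n : ℕ) :
    ∑ j ∈ Finset.range (m + 1), ∑ k ∈ Finset.range (n + 1),
        lagCoeff m j * lagCoeff n k * ((j + k).factorial : ℝ)
      = if m = n then ((n.factorial : ℝ)) ^ 2 else 0 := by
  rw [Finset.sum_comm]
  have h1 : ∀ k ∈ Finset.range (n + 1),
      ∑ j ∈ Finset.range (m + 1), lagCoeff m j * lagCoeff n k * ((j + k).factorial : ℝ)
      = ((m.factorial : ℝ) * (n.factorial : ℝ) * (-1 : ℝ) ^ m)
          * ((-1 : ℝ) ^ k * (n.choose k : ℝ) * (k.choose m : ℝ)) := by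
    intro k hk
    simp only [Finset.mem_range] at hk
    have : ∀ j ∈ Finset.range (m + 1),
        lagCoeff m j * lagCoeff n k * ((j + k).factorial : ℝ)
        = ((m.factorial : ℝ) * (n.factorial : ℝ) * ((-1 : ℝ) ^ k * (n.choose k : ℝ)))
          * ((-1 : ℝ) ^ j * (m.choose j : ℝ) * ((j + k).choose k : ℝ)) := by
      intro j hj
      simp only [Finset.mem_range] at hj
      exact key_term m n j k (by omega) (by omega)
    rw [Finset.sum_congr rfl this, ← Finset.mul_sum, sumA m k]
    ring
  rw [Finset.sum_congr rfl h1, ← Finset.mul_sum, sumB n m]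
  split_ifs with h
  · subst h
    have : ((-1 : ℝ) ^ m) * ((-1 : ℝ) ^ m) = 1 := by
      rw [← pow_add, ← two_mul, pow_mul]
      norm_num
    nlinarith [this]
  · ring

private lemma integrable_exp_neg_pow (p : ℕ) :
    IntegrableOn (fun x : ℝ => Real.exp (-x) * x ^ p) (Set.Ioi 0) := by
  have h := Real.GammaIntegral_convergent (s := (p : ℝ) + 1) (by positivity)
  refine h.congr_fun ?_ measurableSet_Ioi
  intro x hx
  simp only [add_sub_cancel_right]
  rw [Real.rpow_natCast]

private lemma integral_exp_neg_pow (p : ℕ) :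
    ∫ x in Set.Ioi (0 : ℝ), Real.exp (-x) * x ^ p = (p.factorial : ℝ) := by
  rw [← Real.Gamma_nat_eq_factorial p, Real.Gamma_eq_integral (by positivity)]
  refine setIntegral_congr_fun measurableSet_Ioi fun x hx => ?_
  simp only [add_sub_cancel_right]
  rw [Real.rpow_natCast]

/-- Orthogonality of the unnormalized Laguerre polynomials:
`∫₀^∞ e^{-x} L̃_m(x) L̃_n(x) dx = (n!)² δ_{m,n}`. -/
theorem laguerre_orthogonality (m n : ℕ) :
    ∫ x in Set.Ioi (0 : ℝ), Real.exp (-x) * unnormLaguerre m x * unnormLaguerre n x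
      = if m = n then ((n.factorial : ℝ)) ^ 2 else 0 := by
  have hfun : ∀ x : ℝ, Real.exp (-x) * unnormLaguerre m x * unnormLaguerre n x
      = ∑ j ∈ Finset.range (m + 1), ∑ k ∈ Finset.range (n + 1),
          lagCoeff m j * lagCoeff n k * (Real.exp (-x) * x ^ (j + k)) := by
    intro x
    unfold unnormLaguerre
    rw [mul_assoc, Finset.sum_mul_sum, Finset.mul_sum]
    refine Finset.sum_congr rfl fun j _ => ?_
    rw [Finset.mul_sum]
    refine Finset.sum_congr rfl fun k _ => ?_
    unfold lagCoeff
    ring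
  rw [show (fun x => Real.exp (-x) * unnormLaguerre m x * unnormLaguerre n x)
      = fun x => ∑ j ∈ Finset.range (m + 1), ∑ k ∈ Finset.range (n + 1),
          lagCoeff m j * lagCoeff n k * (Real.exp (-x) * x ^ (j + k)) from funext hfun]
  rw [integral_finset_sum _ (fun j _ => integrable_finset_sum _
      (fun k _ => ((integrable_exp_neg_pow (j + k)).const_mul _)))]
  rw [← double_sum m n]
  refine Finset.sum_congr rfl fun j _ => ?_
  rw [integral_finset_sum _ (fun k _ => ((integrable_exp_neg_pow (j + k)).const_mul _))]
  refine Finset.sum_congr rfl fun k _ => ?_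
  rw [integral_const_mul, integral_exp_neg_pow]
end

section
/- For every nonnegative integer n and all x ≥ 0, the unnormalized Laguerre polynomial satisfies L̃_n(x) = exp(x) · dⁿ/dxⁿ (xⁿ exp(-x)) (Rodrigues' formula). -/
open Real

/-- The operator `p ↦ p' - p` on polynomials. -/
noncomputable def lagT (p : Polynomial ℝ) : Polynomial ℝ := Polynomial.derivative p - p

lemma lag_deriv_step (p : Polynomial ℝ) :
    deriv (fun y : ℝ => p.eval y * Real.exp (-y))
      = fun y : ℝ => (lagT p).eval y * Real.exp (-y) := by
  funext y
  have h1 : HasDerivAt (fun y : ℝ => Real.exp (-y)) (-Real.exp (-y)) y := by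
    simpa [Function.comp_def] using (Real.hasDerivAt_exp (-y)).comp y (hasDerivAt_neg y)
  have h2 : HasDerivAt (fun y : ℝ => p.eval y * Real.exp (-y))
      ((Polynomial.derivative p).eval y * Real.exp (-y) + p.eval y * (-Real.exp (-y))) y :=
    (p.hasDerivAt y).mul h1
  rw [h2.deriv, lagT]
  simp [Polynomial.eval_sub]
  ring

lemma lag_iter (m : ℕ) : ∀ p : Polynomial ℝ,
    iteratedDeriv m (fun y : ℝ => p.eval y * Real.exp (-y))
      = fun y : ℝ => (lagT^[m] p).eval y * Real.exp (-y) := by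
  induction m with
  | zero => intro p; simp
  | succ m ih =>
    intro p
    rw [iteratedDeriv_succ', lag_deriv_step, ih (lagT p), Function.iterate_succ_apply]

lemma lag_iter_X_pow (n : ℕ) :
    lagT^[n] ((Polynomial.X : Polynomial ℝ) ^ n)
      = ∑ m ∈ Finset.range (n + 1),
          ((-1 : ℝ) ^ (n - m) * (n.descFactorial m) * (n.choose m)) •
            (Polynomial.X : Polynomial ℝ) ^ (n - m) := by
  have hT : lagT = ⇑((Polynomial.derivative : Module.End ℝ (Polynomial ℝ)) - 1) := by
    funext p; simp [lagT]
  have hcomm : Commute (Polynomial.derivative : Module.End ℝ (Polynomial ℝ)) (-1) :=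
    (Commute.one_right (Polynomial.derivative : Module.End ℝ (Polynomial ℝ))).neg_right
  have hneg : ∀ (j : ℕ) (q : Polynomial ℝ),
      ((-1 : Module.End ℝ (Polynomial ℝ)) ^ j) q = (-1 : ℝ) ^ j • q := by
    intro j q
    rw [show ((-1 : Module.End ℝ (Polynomial ℝ)) ^ j) = ((-1 : ℝ) ^ j) • 1 by
      rw [← neg_one_smul ℝ (1 : Module.End ℝ (Polynomial ℝ)), smul_pow, one_pow]]
    simp
  rw [hT, ← Module.End.pow_apply, sub_eq_add_neg, hcomm.add_pow]
  rw [LinearMap.sum_apply]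
  refine Finset.sum_congr rfl fun m _ => ?_
  rw [Module.End.mul_apply, Module.End.mul_apply, Module.End.natCast_apply, hneg]
  simp only [← Nat.cast_smul_eq_nsmul ℝ, map_smul, Module.End.pow_apply,
    Polynomial.iterate_derivative_X_pow_eq_smul, smul_smul]
  congr 1
  ring

/-- Rodrigues' formula: `L̃_n(x) = e^x (d/dx)^n (x^n e^{-x})` for `x ≥ 0`. -/
theorem laguerre_rodrigues (n : ℕ) (x : ℝ) (hx : 0 ≤ x) :
    unnormLaguerre n x
      = Real.exp x * iteratedDeriv n (fun y : ℝ => y ^ n * Real.exp (-y)) x := by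
  have h0 : (fun y : ℝ => y ^ n * Real.exp (-y))
      = fun y : ℝ => ((Polynomial.X : Polynomial ℝ) ^ n).eval y * Real.exp (-y) := by
    funext y; simp
  rw [h0, lag_iter n, lag_iter_X_pow n]
  rw [← mul_assoc, mul_comm (Real.exp x), mul_assoc, ← Real.exp_add, add_neg_cancel,
    Real.exp_zero, mul_one]
  unfold unnormLaguerre
  rw [Polynomial.eval_finset_sum, ← Finset.sum_range_reflect]
  refine Finset.sum_congr rfl fun k hk => ?_
  have hk' : k ≤ n := Nat.lt_succ_iff.mp (Finset.mem_range.mp hk)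
  have h1 : n - (n - k) = k := by omega
  simp only [Polynomial.eval_smul, Polynomial.eval_pow, Polynomial.eval_X, smul_eq_mul, Nat.add_sub_cancel, h1]
  have hd : ((n - k).factorial : ℝ) * (n.descFactorial k : ℝ) = n.factorial := by
    exact_mod_cast congrArg (Nat.cast (R := ℝ)) (Nat.factorial_mul_descFactorial hk')
  have hc : ((n.choose k : ℝ)) * (k.factorial : ℝ) * ((n - k).factorial : ℝ)
      = n.factorial := by
    exact_mod_cast congrArg (Nat.cast (R := ℝ))
      (Nat.choose_mul_factorial_mul_factorial hk')
  have hkf : (k.factorial : ℝ) ≠ 0 := Nat.cast_ne_zero.mpr k.factorial_ne_zero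
  have hnkf : ((n - k).factorial : ℝ) ≠ 0 := Nat.cast_ne_zero.mpr (n - k).factorial_ne_zero
  have hprod : (((n - k).factorial : ℝ) * (n.descFactorial k : ℝ)) *
      ((n.choose k : ℝ) * (k.factorial : ℝ) * ((n - k).factorial : ℝ))
      = (n.factorial : ℝ) * n.factorial := by rw [hd, hc]
  have key : (n.factorial : ℝ) ^ 2 / (((n - k).factorial : ℝ) ^ 2 * (k.factorial : ℝ))
      = (n.descFactorial k : ℝ) * (n.choose k : ℝ) := by
    rw [div_eq_iff (by positivity)]
    linear_combination -hprod
  rw [key]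
  ring
end
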